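/- arXiv:2003.09539 — 3 statements merged into one kernel-verified Lean document; each statement's English description precedes it below -/
import Mathlib

section
/- Let N be a positive real number, D ≥ 1 a natural number, and S₂ ≥ 0 a real number such that (D−1)·S₂ < N. Then Σ_{i=1}^{D} log₂(N − (i−1)·S₂) ≤ D·log₂ N − D·(D−1)·S₂ / (2·N). -/
lemma aid_sum_aux (S₂ N : ℝ) : ∀ n : ℕ,
    ∑ i ∈ Finset.Icc 1 n, ((i : ℝ) - 1) * S₂ / N = (n : ℝ) * ((n : ℝ) - 1) / 2 * S₂ / N := by
  intro n
  induction n with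
  | zero => simp
  | succ m ih =>
    rw [Finset.sum_Icc_succ_top (Nat.succ_le_succ (Nat.zero_le m)), ih]
    push_cast
    ring

/-- Rigorous form of the paper's upper-bound theorem (Theorem 4): for a positive real
`N`, a natural `D ≥ 1` and a real `S₂ ≥ 0` with `(D−1)·S₂ < N`,
`Σ_{i=1}^{D} log₂(N − (i−1)·S₂) ≤ D·log₂ N − D·(D−1)·S₂ / (2·N)`. -/
theorem aid_upper_bound (N : ℝ) (hN : 0 < N) (D : ℕ) (hD : 1 ≤ D)
    (S₂ : ℝ) (hS₂ : 0 ≤ S₂) (h : ((D : ℝ) - 1) * S₂ < N) :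
    ∑ i ∈ Finset.Icc 1 D, Real.logb 2 (N - ((i : ℝ) - 1) * S₂)
      ≤ (D : ℝ) * Real.logb 2 N - (D : ℝ) * ((D : ℝ) - 1) * S₂ / (2 * N) := by
  have hlog2 : 0 < Real.log 2 := Real.log_pos (by norm_num)
  have hlog2' : Real.log 2 < 1 := by
    have := Real.log_two_lt_d9; linarith
  have key : ∀ i ∈ Finset.Icc 1 D,
      Real.logb 2 (N - ((i : ℝ) - 1) * S₂)
        ≤ Real.logb 2 N - ((i : ℝ) - 1) * S₂ / N := by
    intro i hi
    simp only [Finset.mem_Icc] at hi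
    set t : ℝ := ((i : ℝ) - 1) * S₂ with ht
    have hi1 : (1 : ℝ) ≤ (i : ℝ) := by exact_mod_cast hi.1
    have hiD : (i : ℝ) ≤ (D : ℝ) := by exact_mod_cast hi.2
    have ht0 : 0 ≤ t := mul_nonneg (by linarith) hS₂
    have htN : t < N := lt_of_le_of_lt
      (mul_le_mul_of_nonneg_right (by linarith) hS₂) h
    have hpos : 0 < N - t := by linarith
    have hratio : Real.log ((N - t) / N) ≤ -(t / N) := by
      have h2 := Real.log_le_sub_one_of_pos (show 0 < (N - t) / N from div_pos hpos hN)
      have heq : (N - t) / N - 1 = -(t / N) := by field_simp; ring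
      linarith [heq ▸ h2]
    have hdiff : Real.logb 2 (N - t) - Real.logb 2 N
        = Real.log ((N - t) / N) / Real.log 2 := by
      rw [Real.logb, Real.logb, Real.log_div (by linarith) (ne_of_gt hN)]
      ring
    have hneg : Real.log ((N - t) / N) ≤ 0 := le_trans hratio (neg_nonpos.mpr (by positivity))
    have h1 : Real.log ((N - t) / N) / Real.log 2 ≤ -(t / N) := by
      have hstep : Real.log ((N - t) / N) / Real.log 2 ≤ Real.log ((N - t) / N) := by
        rw [div_le_iff₀ hlog2]
        nlinarith
      linarith
    linarith [hdiff, h1]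
  calc ∑ i ∈ Finset.Icc 1 D, Real.logb 2 (N - ((i : ℝ) - 1) * S₂)
      ≤ ∑ i ∈ Finset.Icc 1 D, (Real.logb 2 N - ((i : ℝ) - 1) * S₂ / N) :=
        Finset.sum_le_sum key
    _ = (D : ℝ) * Real.logb 2 N - (D : ℝ) * ((D : ℝ) - 1) * S₂ / (2 * N) := by
        rw [Finset.sum_sub_distrib, Finset.sum_const, Nat.card_Icc, aid_sum_aux]
        simp only [Nat.add_sub_cancel, nsmul_eq_mul]
        field_simp
end

section
/- Let N, D be natural numbers with 1 ≤ D ≤ N. Then Σ_{i=1}^{D} log₂(N − (i−1)) ≤ D·log₂ N − D·(D−1) / (2·N). -/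
lemma tagt_aux (a b : ℝ) (ha : 0 < a) (hab : a ≤ b) :
    Real.logb 2 a ≤ Real.logb 2 b - (b - a) / b := by
  have hb : 0 < b := lt_of_lt_of_le ha hab
  have hdiv : 0 < a / b := div_pos ha hb
  have hle1 : a / b ≤ 1 := (div_le_one hb).mpr hab
  have hlog2 : (0:ℝ) < Real.log 2 := Real.log_pos (by norm_num)
  have hlog2le : Real.log 2 ≤ 1 := by
    have := Real.log_le_sub_one_of_pos (by norm_num : (0:ℝ) < 2)
    linarith
  have hln : Real.log (a / b) ≤ a / b - 1 := Real.log_le_sub_one_of_pos hdiv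
  have hnp : Real.log (a / b) ≤ 0 := Real.log_nonpos (le_of_lt hdiv) hle1
  have key : Real.logb 2 (a / b) ≤ Real.log (a / b) := by
    rw [Real.logb, div_le_iff₀ hlog2]
    nlinarith
  have hsplit : Real.logb 2 (a / b) = Real.logb 2 a - Real.logb 2 b :=
    Real.logb_div (ne_of_gt ha) (ne_of_gt hb)
  have heq : a / b - 1 = -((b - a) / b) := by field_simp; ring
  linarith [hsplit ▸ key, hln.trans_eq heq]

lemma tagt_sum (D : ℕ) : ∑ i ∈ Finset.Icc 1 D, ((i : ℝ) - 1) = (D : ℝ) * ((D : ℝ) - 1) / 2 := by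
  induction D with
  | zero => simp
  | succ n ih =>
    rw [Finset.sum_Icc_succ_top (Nat.succ_le_succ (Nat.zero_le n)), ih]
    push_cast
    ring

/-- Special case `S₂ = 1` of the paper's upper-bound theorem (Theorem 4),
corresponding to traditional adaptive group testing without pruning: for naturals
`1 ≤ D ≤ N`, `Σ_{i=1}^{D} log₂(N − (i−1)) ≤ D·log₂ N − D·(D−1)/(2·N)`. -/
theorem tagt_upper_bound (N D : ℕ) (hD : 1 ≤ D) (hDN : D ≤ N) :
    ∑ i ∈ Finset.Icc 1 D, Real.logb 2 ((N : ℝ) - ((i : ℝ) - 1))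
      ≤ (D : ℝ) * Real.logb 2 (N : ℝ) - (D : ℝ) * ((D : ℝ) - 1) / (2 * (N : ℝ)) := by
  have hN : (0:ℝ) < N := by
    have : 1 ≤ N := le_trans hD hDN
    exact_mod_cast Nat.lt_of_lt_of_le Nat.zero_lt_one this
  have hterm : ∀ i ∈ Finset.Icc 1 D,
      Real.logb 2 ((N : ℝ) - ((i : ℝ) - 1)) ≤ Real.logb 2 (N : ℝ) - ((i : ℝ) - 1) / N := by
    intro i hi
    simp only [Finset.mem_Icc] at hi
    have hi1 : (1:ℝ) ≤ i := by exact_mod_cast hi.1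
    have hiN : (i:ℝ) ≤ N := by exact_mod_cast le_trans hi.2 hDN
    have ha : (0:ℝ) < (N:ℝ) - ((i:ℝ) - 1) := by linarith
    have := tagt_aux ((N:ℝ) - ((i:ℝ) - 1)) N ha (by linarith)
    have heq : (N:ℝ) - ((N:ℝ) - ((i:ℝ) - 1)) = (i:ℝ) - 1 := by ring
    rw [heq] at this
    exact this
  calc ∑ i ∈ Finset.Icc 1 D, Real.logb 2 ((N : ℝ) - ((i : ℝ) - 1))
      ≤ ∑ i ∈ Finset.Icc 1 D, (Real.logb 2 (N : ℝ) - ((i : ℝ) - 1) / N) :=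
        Finset.sum_le_sum hterm
    _ = (D : ℝ) * Real.logb 2 (N : ℝ) - (D : ℝ) * ((D : ℝ) - 1) / (2 * (N : ℝ)) := by
        rw [Finset.sum_sub_distrib, Finset.sum_const, Nat.card_Icc, ← Finset.sum_div, tagt_sum]
        simp only [Nat.add_sub_cancel, nsmul_eq_mul]
        field_simp
end

section
/- Let J, B, n be natural numbers, and consider the partial order on Fin J × Fin B × Fin n in which (j, b, i) ≤ (j', b', i') iff j < j', or (j = j' and b = b' and i ≤ i'). Then the number of subsets that are chains (including the empty set) equals (B·(2^n − 1) + 1)^J. -/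
/-- `SymACM J B n` is `Fin J × Fin B × Fin n`: the predicates of the symmetric
Approximate Causal DAG with `J` junction-separated segments, `B` branches per
segment, and `n` predicates per branch. -/
def SymACM (J B n : ℕ) := Fin J × Fin B × Fin n

/-- The reachability partial order of the symmetric Approximate Causal DAG:
`(j, b, i) ≤ (j', b', i')` iff `j < j'`, or (`j = j'` and `b = b'` and `i ≤ i'`). -/
instance (J B n : ℕ) : PartialOrder (SymACM J B n) where
  le x y := x.1 < y.1 ∨ (x.1 = y.1 ∧ x.2.1 = y.2.1 ∧ x.2.2 ≤ y.2.2)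
  le_refl x := Or.inr ⟨rfl, rfl, le_refl _⟩
  le_trans x y z h₁ h₂ := by
    obtain ⟨x₁, x₂, x₃⟩ := x; obtain ⟨y₁, y₂, y₃⟩ := y; obtain ⟨z₁, z₂, z₃⟩ := z
    simp only [Fin.lt_def, Fin.le_def, Fin.ext_iff] at h₁ h₂ ⊢
    omega
  le_antisymm x y h₁ h₂ := by
    obtain ⟨x₁, x₂, x₃⟩ := x; obtain ⟨y₁, y₂, y₃⟩ := y
    simp only [Fin.lt_def, Fin.le_def, Fin.ext_iff] at h₁ h₂
    have h : x₁ = y₁ ∧ x₂ = y₂ ∧ x₃ = y₃ := by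
      simp only [Fin.ext_iff]; omega
    exact Prod.ext h.1 (Prod.ext h.2.1 h.2.2)

namespace SymACMAux

instance instFintype (J B n : ℕ) : Fintype (SymACM J B n) :=
  inferInstanceAs (Fintype (Fin J × Fin B × Fin n))

instance instDecEq (J B n : ℕ) : DecidableEq (SymACM J B n) :=
  inferInstanceAs (DecidableEq (Fin J × Fin B × Fin n))

lemma le_iff {J B n : ℕ} (x y : SymACM J B n) :
    x ≤ y ↔ (x.1 < y.1 ∨ (x.1 = y.1 ∧ x.2.1 = y.2.1 ∧ x.2.2 ≤ y.2.2)) := Iff.rfl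

/-- per segment data: nothing, or a branch and a nonempty set of indices -/
abbrev Seg (B n : ℕ) := Option (Fin B × {u : Finset (Fin n) // u.Nonempty})

open Classical in
noncomputable def toSet (J B n : ℕ) (g : Fin J → Seg B n) : Finset (SymACM J B n) :=
  Finset.univ.filter (fun x : SymACM J B n =>
    ∃ bu, g x.1 = some bu ∧ x.2.1 = bu.1 ∧ x.2.2 ∈ bu.2.1)

lemma mem_toSet {J B n : ℕ} (g : Fin J → Seg B n) (x : SymACM J B n) :
    x ∈ toSet J B n g ↔ ∃ bu, g x.1 = some bu ∧ x.2.1 = bu.1 ∧ x.2.2 ∈ bu.2.1 := by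
  simp [toSet]

lemma chain_toSet {J B n : ℕ} (g : Fin J → Seg B n) :
    IsChain (· ≤ ·) ((toSet J B n g : Finset (SymACM J B n)) : Set (SymACM J B n)) := by
  intro x hx y hy hxy
  simp only [Finset.coe_sort_coe, Finset.mem_coe, mem_toSet] at hx hy
  obtain ⟨bu, hgx, hbx, hix⟩ := hx
  obtain ⟨bu', hgy, hby, hiy⟩ := hy
  rcases lt_trichotomy x.1 y.1 with h | h | h
  · exact Or.inl (Or.inl h)
  · rw [h] at hgx; rw [hgx] at hgy
    obtain rfl := Option.some_inj.mp hgy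
    rcases le_total x.2.2 y.2.2 with h2 | h2
    · exact Or.inl (Or.inr ⟨h, hbx.trans hby.symm, h2⟩)
    · exact Or.inr (Or.inr ⟨h.symm, hby.trans hbx.symm, h2⟩)
  · exact Or.inr (Or.inl h)

/-- in a chain, elements in the same segment are in the same branch -/
lemma chain_branch_eq {J B n : ℕ} {s : Finset (SymACM J B n)}
    (hs : IsChain (· ≤ ·) (s : Set (SymACM J B n)))
    {x y : SymACM J B n} (hx : x ∈ s) (hy : y ∈ s) (h : x.1 = y.1) :
    x.2.1 = y.2.1 := by
  by_cases hxy : x = y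
  · rw [hxy]
  · rcases hs hx hy hxy with hle | hle <;> rw [le_iff] at hle
    · rcases hle with h1 | h1
      · exact absurd h1 (by simp [h])
      · exact h1.2.1
    · rcases hle with h1 | h1
      · exact absurd h1 (by simp [h])
      · exact h1.2.1.symm

noncomputable def toChain (J B n : ℕ) (g : Fin J → Seg B n) :
    {s : Finset (SymACM J B n) // IsChain (· ≤ ·) (s : Set (SymACM J B n))} :=
  ⟨toSet J B n g, chain_toSet g⟩

lemma toChain_bijective (J B n : ℕ) : Function.Bijective (toChain J B n) := by
  constructor
  · intro g g' h
    have hset : toSet J B n g = toSet J B n g' := congrArg Subtype.val h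
    funext j
    have key : ∀ bu, g j = some bu → ∀ bu', g' j = some bu' → bu = bu' := by
      intro bu hbu bu' hbu'
      obtain ⟨i, hi⟩ := bu.2.2
      have hmem : ((j, bu.1, i) : SymACM J B n) ∈ toSet J B n g := by
        exact (mem_toSet _ _).mpr ⟨bu, hbu, rfl, hi⟩
      rw [hset] at hmem; replace hmem := (mem_toSet _ _).mp hmem
      obtain ⟨bu'', hbu'', hb, _⟩ := hmem
      rw [hbu'] at hbu''
      have he : bu'' = bu' := (Option.some_inj.mp hbu'').symm
      rw [he] at hb
      have hbeq : bu.1 = bu'.1 := hb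
      have hueq : bu.2.1 = bu'.2.1 := by
        ext i'
        constructor
        · intro hi'
          have : ((j, bu.1, i') : SymACM J B n) ∈ toSet J B n g := by
            exact (mem_toSet _ _).mpr ⟨bu, hbu, rfl, hi'⟩
          rw [hset] at this; replace this := (mem_toSet _ _).mp this
          obtain ⟨c, hc, hc1, hc2⟩ := this
          rw [hbu'] at hc
          have he2 : c = bu' := (Option.some_inj.mp hc).symm
          rw [he2] at hc2
          exact hc2
        · intro hi'
          have : ((j, bu'.1, i') : SymACM J B n) ∈ toSet J B n g' := by
            exact (mem_toSet _ _).mpr ⟨bu', hbu', rfl, hi'⟩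
          rw [← hset] at this; replace this := (mem_toSet _ _).mp this
          obtain ⟨c, hc, hc1, hc2⟩ := this
          rw [hbu] at hc
          have he2 : c = bu := (Option.some_inj.mp hc).symm
          rw [he2] at hc2
          exact hc2
      exact Prod.ext hbeq (Subtype.ext hueq)
    match hg : g j, hg' : g' j with
    | none, none => rfl
    | none, some bu' =>
        obtain ⟨i, hi⟩ := bu'.2.2
        have : ((j, bu'.1, i) : SymACM J B n) ∈ toSet J B n g' := by
          exact (mem_toSet _ _).mpr ⟨bu', hg', rfl, hi⟩
        rw [← hset] at this; replace this := (mem_toSet _ _).mp this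
        obtain ⟨c, hc, -, -⟩ := this
        rw [hg] at hc; exact absurd hc (by simp)
    | some bu, none =>
        obtain ⟨i, hi⟩ := bu.2.2
        have : ((j, bu.1, i) : SymACM J B n) ∈ toSet J B n g := by
          exact (mem_toSet _ _).mpr ⟨bu, hg, rfl, hi⟩
        rw [hset] at this; replace this := (mem_toSet _ _).mp this
        obtain ⟨c, hc, -, -⟩ := this
        rw [hg'] at hc; exact absurd hc (by simp)
    | some bu, some bu' => exact congrArg some (key bu hg bu' hg')
  · rintro ⟨s, hs⟩
    classical
    set g : Fin J → Seg B n := fun j => if h : ∃ x ∈ s, x.1 = j then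
        some (h.choose.2.1, ⟨(s.filter (fun x => x.1 = j)).image (fun x => x.2.2),
          ⟨h.choose.2.2, Finset.mem_image.mpr ⟨h.choose,
            Finset.mem_filter.mpr ⟨h.choose_spec.1, h.choose_spec.2⟩, rfl⟩⟩⟩)
      else none with hgdef
    refine ⟨g, Subtype.ext ?_⟩
    show toSet J B n g = s
    ext x
    rw [mem_toSet]
    constructor
    · rintro ⟨bu, hbu, hb, hi⟩
      rw [hgdef] at hbu
      simp only at hbu
      split_ifs at hbu with h
      · have heq := Option.some_inj.mp hbu
        rw [← heq] at hb hi
        simp only [Finset.mem_image, Finset.mem_filter] at hi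
        obtain ⟨y, ⟨hys, hyj⟩, hyi⟩ := hi
        have hby : x.2.1 = y.2.1 := by
          rw [hb]
          exact chain_branch_eq hs h.choose_spec.1 hys (h.choose_spec.2.trans hyj.symm)
        have : x = y := Prod.ext hyj.symm (Prod.ext hby hyi.symm)
        rw [this]; exact hys
    · intro hxs
      have h : ∃ y ∈ s, y.1 = x.1 := ⟨x, hxs, rfl⟩
      refine ⟨(h.choose.2.1, ⟨(s.filter (fun y => y.1 = x.1)).image (fun y => y.2.2),
          ⟨h.choose.2.2, Finset.mem_image.mpr ⟨h.choose,
            Finset.mem_filter.mpr ⟨h.choose_spec.1, h.choose_spec.2⟩, rfl⟩⟩⟩), ?_, ?_, ?_⟩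
      · rw [hgdef]
        simp only
        rw [dif_pos h]
      · exact (chain_branch_eq hs hxs h.choose_spec.1 h.choose_spec.2.symm)
      · exact Finset.mem_image.mpr ⟨x, Finset.mem_filter.mpr ⟨hxs, rfl⟩, rfl⟩

lemma card_nonempty_subsets (n : ℕ) :
    Nat.card {u : Finset (Fin n) // u.Nonempty} = 2 ^ n - 1 := by
  classical
  rw [Nat.card_eq_fintype_card]
  simp only [Finset.nonempty_iff_ne_empty]
  rw [Fintype.card_subtype_compl]
  simp [Fintype.card_subtype_eq]

end SymACMAux

/-- The number of chain subsets (including `∅`) of the symmetric Approximate Causal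
DAG order is `(B·(2^n − 1) + 1)^J`: the size of the Causal Path Discovery search
space. -/
theorem card_chains_symACM (J B n : ℕ) :
    Nat.card {s : Finset (SymACM J B n) // IsChain (· ≤ ·) (s : Set (SymACM J B n))}
      = (B * (2 ^ n - 1) + 1) ^ J := by
  classical
  rw [← Nat.card_congr (Equiv.ofBijective _ (SymACMAux.toChain_bijective J B n))]
  rw [Nat.card_fun]
  rw [Nat.card_eq_fintype_card (α := Fin J), Fintype.card_fin]
  congr 1
  rw [Finite.card_option, Nat.card_prod, Nat.card_eq_fintype_card (α := Fin B),
    Fintype.card_fin, SymACMAux.card_nonempty_subsets]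
end
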